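/- There is a ring isomorphism B/q ≅ (A/p)⟦y⟧ between the quotient of B by q and the formal power series ring in one variable over A/p; in particular, q is a prime ideal of B. -/

import Mathlib

open MvPowerSeries

/-- The ideal `(xy - c)` in the formal power series ring `A⟦x,y⟧`, where `x = X 0`,
`y = X 1`. -/
noncomputable def hyperIdeal (A : Type) [CommRing A] (c : A) :
    Ideal (MvPowerSeries (Fin 2) A) :=
  Ideal.span {X 0 * X 1 - C (σ := Fin 2) (R := A) c}

/-- The ring `B = A⟦x,y⟧/(xy - c)`. -/
abbrev Bring (A : Type) [CommRing A] (c : A) : Type :=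
  MvPowerSeries (Fin 2) A ⧸ hyperIdeal A c

/-- The ideal `q` of `B` generated by (the image of) a prime ideal `p` of `A`
together with the class of `x`. -/
noncomputable def qIdeal (A : Type) [CommRing A] (c : A) (p : Ideal A) :
    Ideal (Bring A c) :=
  Ideal.span (insert (Ideal.Quotient.mk (hyperIdeal A c) (X 0))
    ((fun a => Ideal.Quotient.mk (hyperIdeal A c) (C (σ := Fin 2) (R := A) a)) '' (p : Set A)))

section Aux

lemma fin2_eq_single {d : Fin 2 →₀ ℕ} (h : d 0 = 0) : d = Finsupp.single 1 (d 1) := by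
  ext i
  fin_cases i <;> simp [Finsupp.single_apply, h]

/-- An auxiliary power series supported on `y`-monomials. -/
noncomputable def diagSeries (R : Type) [CommRing R] (c : ℕ → R) :
    MvPowerSeries (Fin 2) R :=
  fun d => if d 0 = 0 then c (d 1) else 0

lemma coeff_diagSeries (R : Type) [CommRing R] (c : ℕ → R) (d : Fin 2 →₀ ℕ) :
    MvPowerSeries.coeff d (diagSeries R c) = if d 0 = 0 then c (d 1) else 0 := rfl

/-- The "set X₀ = 0" ring hom from `R⟦x,y⟧` to `R⟦y⟧`. -/
noncomputable def restrictY (R : Type) [CommRing R] :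
    MvPowerSeries (Fin 2) R →+* PowerSeries R where
  toFun f := PowerSeries.mk fun n => MvPowerSeries.coeff (Finsupp.single 1 n) f
  map_one' := by
    ext n
    simp [MvPowerSeries.coeff_one, Finsupp.single_eq_zero]
  map_mul' f g := by
    ext n
    rw [PowerSeries.coeff_mk, MvPowerSeries.coeff_mul, PowerSeries.coeff_mul,
      Finsupp.antidiagonal_single, Finset.sum_map]
    simp
  map_zero' := by
    ext n; simp
  map_add' f g := by
    ext n; simp

variable (A : Type) [CommRing A] (p : Ideal A)

/-- The hom `A⟦x,y⟧ → (A/p)⟦y⟧`. -/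
noncomputable def phiHom : MvPowerSeries (Fin 2) A →+* PowerSeries (A ⧸ p) :=
  (restrictY (A ⧸ p)).comp (MvPowerSeries.map (Ideal.Quotient.mk p))

lemma coeff_phiHom (f : MvPowerSeries (Fin 2) A) (n : ℕ) :
    PowerSeries.coeff n (phiHom A p f)
      = Ideal.Quotient.mk p (MvPowerSeries.coeff (Finsupp.single 1 n) f) := by
  simp [phiHom, restrictY]

lemma phiHom_surjective : Function.Surjective (phiHom A p) := by
  classical
  intro g
  refine ⟨fun d => if d 0 = 0 then
      (Ideal.Quotient.mk_surjective (PowerSeries.coeff (d 1) g)).choose else 0, ?_⟩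
  ext n
  erw [coeff_phiHom, MvPowerSeries.coeff_apply]
  have h0 : (Finsupp.single (1 : Fin 2) n) 0 = 0 := by
    simp [Finsupp.single_apply]
  rw [if_pos h0, Finsupp.single_eq_same]
  exact (Ideal.Quotient.mk_surjective (PowerSeries.coeff n g)).choose_spec

lemma mem_ker_phiHom (f : MvPowerSeries (Fin 2) A) :
    f ∈ RingHom.ker (phiHom A p) ↔
      ∀ n, MvPowerSeries.coeff (Finsupp.single 1 n) f ∈ p := by
  rw [RingHom.mem_ker, PowerSeries.ext_iff]
  refine forall_congr' fun n => ?_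
  rw [coeff_phiHom, map_zero, Ideal.Quotient.eq_zero_iff_mem]

variable [IsNoetherianRing A]

lemma ker_phiHom :
    RingHom.ker (phiHom A p)
      = Ideal.span (insert (X 0 : MvPowerSeries (Fin 2) A) (C (σ := Fin 2) (R := A) '' (p : Set A))) := by
  classical
  apply le_antisymm
  · intro f hf
    rw [mem_ker_phiHom] at hf
    obtain ⟨s, hs⟩ := IsNoetherian.noetherian p
    have hsp : (s : Set A) ⊆ (p : Set A) := by rw [← hs]; exact Ideal.subset_span
    have hchoice : ∀ n : ℕ, ∃ cfun : A → A,
        ∑ a ∈ s, cfun a * a = MvPowerSeries.coeff (Finsupp.single 1 n) f := by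
      intro n
      have h := hf n
      rw [← hs] at h
      obtain ⟨cfun, hcfun⟩ := Submodule.mem_span_finset.mp h
      exact ⟨cfun, by simpa [smul_eq_mul] using hcfun.2⟩
    choose cf hcf using hchoice
    set F : MvPowerSeries (Fin 2) A :=
      ∑ a ∈ s, C (σ := Fin 2) (R := A) a * diagSeries A (fun n => cf n a) with hFdef
    have hF : F ∈ Ideal.span
        (insert (X 0 : MvPowerSeries (Fin 2) A) (C (σ := Fin 2) (R := A) '' (p : Set A))) := by
      refine Ideal.sum_mem _ fun a ha => Ideal.mul_mem_right _ _ ?_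
      exact Ideal.subset_span (Set.mem_insert_of_mem _ ⟨a, hsp ha, rfl⟩)
    have hdvd : (X 0 : MvPowerSeries (Fin 2) A) ∣ f - F := by
      rw [MvPowerSeries.X_dvd_iff]
      intro m hm
      have hm' : m = Finsupp.single 1 (m 1) := fin2_eq_single hm
      have hcF : MvPowerSeries.coeff m F = ∑ a ∈ s, cf (m 1) a * a := by
        rw [hFdef, map_sum]
        refine Finset.sum_congr rfl fun a ha => ?_
        rw [MvPowerSeries.coeff_C_mul, coeff_diagSeries, if_pos hm, mul_comm]
      have hcf' : MvPowerSeries.coeff m f = ∑ a ∈ s, cf (m 1) a * a := by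
        conv_lhs => rw [hm']
        exact (hcf (m 1)).symm
      rw [map_sub, hcF, hcf', sub_self]
    obtain ⟨r, hr⟩ := hdvd
    have : f = F + X 0 * r := by rw [← hr]; ring
    rw [this]
    exact Ideal.add_mem _ hF
      (Ideal.mul_mem_right _ _ (Ideal.subset_span (Set.mem_insert _ _)))
  · rw [Ideal.span_le]
    rintro g (rfl | ⟨a, ha, rfl⟩)
    · rw [SetLike.mem_coe, mem_ker_phiHom]
      intro n
      rw [MvPowerSeries.coeff_X, if_neg]
      · exact Submodule.zero_mem p
      intro h
      have := DFunLike.congr_fun h 0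
      simp [Finsupp.single_apply] at this
    · rw [SetLike.mem_coe, mem_ker_phiHom]
      intro n
      rw [MvPowerSeries.coeff_C]
      split
      · exact ha
      · exact Submodule.zero_mem p

end Aux

/-- Let `A` be a Noetherian local ring, `c` an element of its maximal ideal,
`B = A⟦x,y⟧/(xy - c)`, `p` a prime ideal of `A` containing `c` and `q` the ideal of `B`
generated by `p` and `x`.  Then `B/q` is isomorphic, as a ring, to `(A/p)⟦y⟧`;
in particular `q` is a prime ideal of `B`. -/
theorem quotient_iso_powerSeries (A : Type) [CommRing A] [IsNoetherianRing A]
    [IsLocalRing A] (c : A) (hc : c ∈ IsLocalRing.maximalIdeal A)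
    (p : Ideal A) [p.IsPrime] (hcp : c ∈ p) :
    Nonempty ((Bring A c ⧸ qIdeal A c p) ≃+* PowerSeries (A ⧸ p)) ∧
      (qIdeal A c p).IsPrime := by
  classical
  set J : Ideal (MvPowerSeries (Fin 2) A) :=
    Ideal.span (insert (X 0 : MvPowerSeries (Fin 2) A) (C (σ := Fin 2) (R := A) '' (p : Set A))) with hJ
  have hXJ : (X 0 : MvPowerSeries (Fin 2) A) ∈ J :=
    Ideal.subset_span (Set.mem_insert _ _)
  have hCJ : ∀ a ∈ p, C (σ := Fin 2) (R := A) a ∈ J := fun a ha =>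
    Ideal.subset_span (Set.mem_insert_of_mem _ ⟨a, ha, rfl⟩)
  have hIJ : hyperIdeal A c ≤ J := by
    rw [hyperIdeal, Ideal.span_le, Set.singleton_subset_iff]
    exact Submodule.sub_mem _ (Ideal.mul_mem_right _ _ hXJ) (hCJ c hcp)
  have hq : qIdeal A c p = J.map (Ideal.Quotient.mk (hyperIdeal A c)) := by
    rw [qIdeal, hJ, Ideal.map_span, Set.image_insert_eq, Set.image_image]
  have e1 : (Bring A c ⧸ qIdeal A c p) ≃+* MvPowerSeries (Fin 2) A ⧸ J := by
    refine (Ideal.quotEquivOfEq hq).trans ?_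
    exact (DoubleQuot.quotQuotEquivQuotSup (hyperIdeal A c) J).trans
      (Ideal.quotEquivOfEq (sup_eq_right.mpr hIJ))
  have e2 : (MvPowerSeries (Fin 2) A ⧸ J) ≃+* PowerSeries (A ⧸ p) :=
    (Ideal.quotEquivOfEq (ker_phiHom A p).symm).trans
      (RingHom.quotientKerEquivOfSurjective (phiHom_surjective A p))
  have e : (Bring A c ⧸ qIdeal A c p) ≃+* PowerSeries (A ⧸ p) := e1.trans e2
  refine ⟨⟨e⟩, ?_⟩
  have : IsDomain (Bring A c ⧸ qIdeal A c p) := e.toMulEquiv.isDomain _ -- fix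
  exact Ideal.Quotient.isDomain_iff_prime _ |>.mp this
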